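/- Let s > 0, I_L > 0 and define π_F(I_F) = ((I_L + I_F)/(3 I_L))² - s I_F². If I_L > sqrt(2/(9s)), then the unique maximizer of π_F over [0, I_L] is I_F* = I_L/(9 s I_L² - 1); if I_L ≤ sqrt(2/(9s)), then the maximizer (breaking ties toward I_L) is I_F* = I_L. -/

import Mathlib

theorem stmt2 (s IL : ℝ) (hs : 0 < s) (hIL : 0 < IL)
    (piF : ℝ → ℝ)
    (hpiF : ∀ IF, piF IF = ((IL + IF) / (3 * IL)) ^ 2 - s * IF ^ 2) :
    (IL > Real.sqrt (2 / (9 * s)) →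
      (IL / (9 * s * IL ^ 2 - 1) ∈ Set.Icc (0 : ℝ) IL ∧
        ∀ x ∈ Set.Icc (0 : ℝ) IL, x ≠ IL / (9 * s * IL ^ 2 - 1) →
          piF x < piF (IL / (9 * s * IL ^ 2 - 1)))) ∧
    (IL ≤ Real.sqrt (2 / (9 * s)) →
      ∀ x ∈ Set.Icc (0 : ℝ) IL, piF x ≤ piF IL) := by
  constructor
  · intro hgt
    have h9s : (0:ℝ) < 9 * s := by linarith
    have h2 : 2 / (9 * s) < IL ^ 2 := by
      have := (Real.sqrt_lt' hIL).mp hgt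
      simpa [sq] using this
    have hD : 1 < 9 * s * IL ^ 2 - 1 := by
      have := (div_lt_iff₀ h9s).mp h2
      nlinarith
    have hDpos : (0:ℝ) < 9 * s * IL ^ 2 - 1 := by linarith
    refine ⟨⟨by positivity, div_le_self hIL.le (by linarith)⟩, ?_⟩
    intro x hx hne
    have hne' : (9 * s * IL ^ 2 - 1) * x - IL ≠ 0 := by
      intro h
      apply hne
      rw [eq_div_iff (ne_of_gt hDpos)]
      linarith [h]
    have hsq : 0 < ((9 * s * IL ^ 2 - 1) * x - IL) ^ 2 := by positivity
    rw [hpiF, hpiF, ← sub_pos]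
    have hILne : IL ≠ 0 := ne_of_gt hIL
    have hDne : (9 * s * IL ^ 2 - 1) ≠ 0 := ne_of_gt hDpos
    have key : ((IL + IL / (9 * s * IL ^ 2 - 1)) / (3 * IL)) ^ 2 - s * (IL / (9 * s * IL ^ 2 - 1)) ^ 2
        - (((IL + x) / (3 * IL)) ^ 2 - s * x ^ 2)
        = ((9 * s * IL ^ 2 - 1) * x - IL) ^ 2 / (9 * IL ^ 2 * (9 * s * IL ^ 2 - 1)) := by
      generalize hDd : 9 * s * IL ^ 2 - 1 = D at hDne ⊢
      field_simp
      rw [← hDd]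
      ring
    rw [key]
    exact div_pos hsq (by positivity)
  · intro hle
    have h9s : (0:ℝ) < 9 * s := by linarith
    have h2 : IL ^ 2 ≤ 2 / (9 * s) := by rw [← Real.le_sqrt hIL.le (by positivity)]; exact hle
    have hkey : 9 * s * IL ^ 2 ≤ 2 := by
      have := (le_div_iff₀ h9s).mp h2
      nlinarith
    intro x hx
    obtain ⟨hx0, hxIL⟩ := hx
    have hf : 0 ≤ 2 * IL - (9 * s * IL ^ 2 - 1) * (IL + x) := by nlinarith
    have hprod : 0 ≤ (IL - x) * (2 * IL - (9 * s * IL ^ 2 - 1) * (IL + x)) :=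
      mul_nonneg (by linarith) hf
    rw [hpiF, hpiF, ← sub_nonneg]
    have hILne : IL ≠ 0 := ne_of_gt hIL
    field_simp
    nlinarith [hprod]
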